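/- Let A and B be independent square-integrable real-valued random variables on a probability space, with variances a = Var(A) > 0 and b = Var(B) > 0. Then: (i) for every β ∈ ℝ, Var(βA + (1−β)B) = β² a + (1−β)² b; and (ii) the function β ↦ β² a + (1−β)² b attains its unique global minimum at β* = b/(a+b). Consequently, in the simplified DARTS search space with two operations where the mixed edge output estimating the optimal feature map m* is ō = β_skip·x_e + β_conv·o_conv(x_e) with β_skip + β_conv = 1, and where x_e − m* and o_conv(x_e) − m* are independent with positive variances, the weights minimizing Var(ō − m*) satisfy β_skip = Var(o_conv(x_e) − m*)/(Var(x_e − m*) + Var(o_conv(x_e) − m*)) and β_conv = Var(x_e − m*)/(Var(x_e − m*) + Var(o_conv(x_e) − m*)); in particular β_skip ∝ Var(o_conv(x_e) − m*) and β_conv ∝ Var(x_e − m*). -/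

import Mathlib

open MeasureTheory ProbabilityTheory

/-- For independent square-integrable real random variables `A`, `B` with positive
variances `a`, `b`:
(i) `Var(βA + (1−β)B) = β²a + (1−β)²b` for every `β`;
(ii) `β ↦ β²a + (1−β)²b` attains its unique global minimum at `β* = b/(a+b)`;
consequently, among all weights `β_skip + β_conv = 1`, the variance
`Var(β_skip·A + β_conv·B)` is minimized exactly at
`β_skip = b/(a+b)` and `β_conv = a/(a+b)` (with `A = x_e − m*`,
`B = o_conv(x_e) − m*`). -/
theorem variance_mixed_min (Ω : Type*) [MeasureSpace Ω]
    [IsProbabilityMeasure (volume : Measure Ω)]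
    (A B : Ω → ℝ) (hA : MemLp A 2 volume) (hB : MemLp B 2 volume)
    (hInd : IndepFun A B volume)
    (a b : ℝ) (ha : a = variance A volume) (hb : b = variance B volume)
    (hapos : 0 < a) (hbpos : 0 < b) :
    (∀ β : ℝ, variance (fun ω => β * A ω + (1 - β) * B ω) volume
        = β ^ 2 * a + (1 - β) ^ 2 * b) ∧
    (∀ β : ℝ, β ≠ b / (a + b) →
      (b / (a + b)) ^ 2 * a + (1 - b / (a + b)) ^ 2 * b
        < β ^ 2 * a + (1 - β) ^ 2 * b) ∧
    (∀ βskip βconv : ℝ, βskip + βconv = 1 →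
      ((∀ βskip' βconv' : ℝ, βskip' + βconv' = 1 →
          variance (fun ω => βskip * A ω + βconv * B ω) volume ≤
            variance (fun ω => βskip' * A ω + βconv' * B ω) volume) ↔
        (βskip = b / (a + b) ∧ βconv = a / (a + b)))) := by
  have habpos : 0 < a + b := by linarith
  have key : ∀ β γ : ℝ, variance (fun ω => β * A ω + γ * B ω) volume
      = β ^ 2 * a + γ ^ 2 * b := by
    intro β γ
    have h1 : IndepFun (fun ω => β * A ω) (fun ω => γ * B ω) volume :=
      hInd.comp (measurable_const_mul β) (measurable_const_mul γ)
    have h2 : MemLp (fun ω => β * A ω) 2 volume := hA.const_mul β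
    have h3 : MemLp (fun ω => γ * B ω) 2 volume := hB.const_mul γ
    have := h1.variance_add h2 h3
    rw [show ((fun ω => β * A ω) + fun ω => γ * B ω)
        = fun ω => β * A ω + γ * B ω from rfl] at this
    rw [this, variance_const_mul, variance_const_mul, ha, hb]
  have hmin : ∀ β : ℝ, β ≠ b / (a + b) →
      (b / (a + b)) ^ 2 * a + (1 - b / (a + b)) ^ 2 * b
        < β ^ 2 * a + (1 - β) ^ 2 * b := by
    intro β hβ
    have h : β * (a + b) - b ≠ 0 := by
      intro h
      apply hβ
      field_simp
      linarith
    have h2 : 0 < (β * (a + b) - b) ^ 2 := by positivity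
    have hL : (b / (a + b)) ^ 2 * a + (1 - b / (a + b)) ^ 2 * b = a * b / (a + b) := by
      field_simp
      ring
    rw [hL, div_lt_iff₀ habpos]
    nlinarith [h2]
  refine ⟨fun β => key β (1 - β), hmin, ?_⟩
  intro βskip βconv hsum
  have hconv : βconv = 1 - βskip := by linarith
  constructor
  · intro hle
    have h1 := hle (b / (a + b)) (a / (a + b)) (by field_simp; ring)
    rw [key, key] at h1
    have hconv' : (a / (a + b)) = 1 - b / (a + b) := by field_simp; ring
    by_contra hne
    have hne' : βskip ≠ b / (a + b) := by
      intro h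
      apply hne
      constructor
      · exact h
      · rw [hconv, h, ← hconv']
    have := hmin βskip hne'
    rw [hconv, hconv'] at h1
    linarith
  · rintro ⟨h1, h2⟩
    intro βskip' βconv' hsum'
    rw [key, key, h1, h2]
    have hconv2 : βconv' = 1 - βskip' := by linarith
    have hconv' : (a / (a + b)) = 1 - b / (a + b) := by field_simp; ring
    rw [hconv2, hconv']
    rcases eq_or_ne βskip' (b / (a + b)) with h | h
    · rw [h]
    · exact (hmin βskip' h).le
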